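/- General composition for sequential types: if Γ ⊢ M : σ and Γ ⊢ N : τ and the type composition σ.τ is defined, then Γ ⊢ M;N : σ.τ. -/

import Mathlib

/-- Terms of the sequential λ-calculus in de Bruijn representation
(so terms are automatically identified up to α-equivalence):
nil `*`, variable prefix `x.M`, push/application `[N].M`,
and pop/abstraction `<x>.M`. -/
inductive STm : Type
  | star : STm
  | var  : Nat → STm → STm
  | push : STm → STm → STm
  | pop  : STm → STm

namespace STm

/-- Lifting of a renaming under a binder. -/
def liftF (f : Nat → Nat) : Nat → Nat
  | 0 => 0
  | n+1 => f n + 1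

/-- Renaming of de Bruijn indices. -/
def rename (f : Nat → Nat) : STm → STm
  | star => star
  | var n M => var (f n) (rename f M)
  | push N M => push (rename f N) (rename f M)
  | pop M => pop (rename (liftF f) M)

/-- Capture-avoiding composition `N ; M`. -/
def comp : STm → STm → STm
  | star, P => P
  | var n N, P => var n (comp N P)
  | push Q N, P => push Q (comp N P)
  | pop N, P => pop (comp N (rename Nat.succ P))

/-- Lifting of a substitution under a binder. -/
def liftS (σ : Nat → STm) : Nat → STm
  | 0 => var 0 star
  | n+1 => rename Nat.succ (σ n)

/-- Capture-avoiding simultaneous substitution; note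
`{N/x}(x.M) = N ; {N/x}M`. -/
def subst (σ : Nat → STm) : STm → STm
  | star => star
  | var n M => comp (σ n) (subst σ M)
  | push N M => push (subst σ N) (subst σ M)
  | pop M => pop (subst (liftS σ) M)

/-- Capture-avoiding substitution `{N/x}M` of `N` for the variable bound
immediately outside `M`. -/
def subst1 (N : STm) : STm → STm :=
  subst (fun n => match n with | 0 => N | n+1 => var n star)

end STm

/-- Machine states: a stack of terms (written bottom-first, so the top
element is the last element of the list) together with a term. -/
abbrev SState := List STm × STm

/-- The transitions of the sequential stack machine:
`(S, [N].M) → (S·N, M)` and `(S·N, <x>.M) → (S, {N/x}M)`. -/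
inductive SMStep : SState → SState → Prop
  | push (S : List STm) (N M : STm) : SMStep (S, .push N M) (S ++ [N], M)
  | pop (S : List STm) (N M : STm) : SMStep (S ++ [N], .pop M) (S, STm.subst1 N M)

/-- A run of the sequential machine: a finite sequence of transitions. -/
def SRun : SState → SState → Prop := Relation.ReflTransGen SMStep

/-- Sequential types `ρ_n…ρ_1 ⟹ τ_1…τ_m`: an implication between two
finite vectors of sequential types. The first list is the input vector
as written (i.e. `arr (rev ρ⃗) τ⃗` represents `rev(ρ⃗) ⟹ τ⃗`). -/
inductive STy : Type
  | arr : List STy → List STy → STy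

/-- Typing judgments `Γ ⊢ M : τ` of the sequential λ-calculus, with the
context `Γ` a finite map from (de Bruijn) variables to types, given as a
list. -/
inductive Typing : List STy → STm → STy → Prop
  | star (Γ : List STy) (τs : List STy) :
      Typing Γ .star (.arr τs.reverse τs)
  | var (Γ : List STy) (n : Nat) (M : STm) (ρs σs τs υs : List STy) :
      Γ[n]? = some (.arr ρs.reverse σs) →
      Typing Γ M (.arr (σs.reverse ++ τs.reverse) υs) →
      Typing Γ (.var n M) (.arr (ρs.reverse ++ τs.reverse) υs)
  | abs (Γ : List STy) (M : STm) (ρ : STy) (σs τs : List STy) :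
      Typing (ρ :: Γ) M (.arr σs.reverse τs) →
      Typing Γ (.pop M) (.arr (ρ :: σs.reverse) τs)
  | app (Γ : List STy) (N M : STm) (ρ : STy) (σs τs : List STy) :
      Typing Γ N ρ →
      Typing Γ M (.arr (ρ :: σs.reverse) τs) →
      Typing Γ (.push N M) (.arr σs.reverse τs)

/-- Type composition `σ.τ`, a partial operation given as a relation:
`TyComp σ τ ω` holds iff `σ.τ` is defined and equal to `ω`. -/
inductive TyComp : STy → STy → STy → Prop
  | left (ρs σs υs τs : List STy) :
      TyComp (.arr ρs.reverse σs) (.arr (σs.reverse ++ υs.reverse) τs)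
             (.arr (ρs.reverse ++ υs.reverse) τs)
  | right (ρs σs υs τs : List STy) :
      TyComp (.arr ρs.reverse (υs ++ σs)) (.arr σs.reverse τs)
             (.arr ρs.reverse (υs ++ τs))

/-- Generalized var rule. -/
theorem Typing.var' {Γ : List STy} {n : Nat} {M : STm} {a σs b υs : List STy}
    (h : Γ[n]? = some (.arr a σs))
    (hM : Typing Γ M (.arr (σs.reverse ++ b) υs)) :
    Typing Γ (.var n M) (.arr (a ++ b) υs) := by
  have := Typing.var Γ n M a.reverse σs b.reverse υs
  simp only [List.reverse_reverse] at this
  exact this h hM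

/-- Generalized abs rule. -/
theorem Typing.abs' {Γ : List STy} {M : STm} {ρ : STy} {s τs : List STy}
    (hM : Typing (ρ :: Γ) M (.arr s τs)) :
    Typing Γ (.pop M) (.arr (ρ :: s) τs) := by
  have := Typing.abs Γ M ρ s.reverse τs
  simp only [List.reverse_reverse] at this
  exact this hM

/-- Generalized app rule. -/
theorem Typing.app' {Γ : List STy} {N M : STm} {ρ : STy} {s τs : List STy}
    (hN : Typing Γ N ρ) (hM : Typing Γ M (.arr (ρ :: s) τs)) :
    Typing Γ (.push N M) (.arr s τs) := by
  have := Typing.app Γ N M ρ s.reverse τs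
  simp only [List.reverse_reverse] at this
  exact this hN hM

theorem TyComp.left' (a σs c τs : List STy) :
    TyComp (.arr a σs) (.arr (σs.reverse ++ c) τs) (.arr (a ++ c) τs) := by
  have := TyComp.left a.reverse σs c.reverse τs
  simpa using this

theorem TyComp.right' (a υs σs τs : List STy) :
    TyComp (.arr a (υs ++ σs)) (.arr σs.reverse τs) (.arr a (υs ++ τs)) := by
  have := TyComp.right a.reverse σs υs τs
  simpa using this

/-- Renaming preserves typing. -/
theorem Typing.rename_aux : ∀ {Γ M τ}, Typing Γ M τ →
    ∀ {Δ : List STy} {f : Nat → Nat},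
      (∀ n x, Γ[n]? = some x → Δ[f n]? = some x) →
      Typing Δ (M.rename f) τ := by
  intro Γ M τ h
  induction h with
  | star Γ τs => intro Δ f _; exact Typing.star Δ τs
  | var Γ n M ρs σs τs υs hget _ ih =>
      intro Δ f hf
      exact Typing.var Δ (f n) _ ρs σs τs υs (hf n _ hget) (ih hf)
  | abs Γ M ρ σs τs _ ih =>
      intro Δ f hf
      refine Typing.abs Δ _ ρ σs τs (ih ?_)
      intro n x hx
      cases n with
      | zero =>
          have hxe : x = ρ := by simpa using hx.symm
          subst hxe
          rfl
      | succ n =>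
          simp only [List.getElem?_cons_succ] at hx
          simpa [STm.liftF] using hf n x hx
  | app Γ N M ρ σs τs _ _ ihN ihM =>
      intro Δ f hf
      exact Typing.app Δ _ _ ρ σs τs (ihN hf) (ihM hf)

/-- Weakening. -/
theorem Typing.weaken {Γ : List STy} {N : STm} {τ : STy} (ρ : STy)
    (h : Typing Γ N τ) : Typing (ρ :: Γ) (N.rename Nat.succ) τ :=
  h.rename_aux (fun n x hx => by simpa using hx)

/-- Thinning: extra inputs passed through to outputs. -/
theorem Typing.thin : ∀ {Γ N σ}, Typing Γ N σ →
    ∀ s ts us, σ = .arr s ts → Typing Γ N (.arr (s ++ us.reverse) (us ++ ts)) := by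
  intro Γ N σ h
  induction h with
  | star Γ τs =>
      intro s ts us he
      cases he
      have := Typing.star Γ (us ++ τs)
      simpa using this
  | var Γ n M ρs σs τs υs hget _ ih =>
      intro s ts us he
      cases he
      have hM := ih _ _ us rfl
      rw [List.append_assoc] at hM ⊢
      exact Typing.var' hget hM
  | abs Γ M ρ σs τs _ ih =>
      intro s ts us he
      cases he
      have hM := ih _ _ us rfl
      exact Typing.abs' hM
  | app Γ N M ρ σs τs hN hM ihN ihM =>
      intro s ts us he
      cases he
      have hM'' := ihM _ _ us rfl
      rw [List.cons_append] at hM''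
      exact Typing.app' hN hM''


/-- Inversion for type composition. -/
theorem TyComp.inv {a b : List STy} {τ ω : STy} (h : TyComp (.arr a b) τ ω) :
    (∃ c τs, τ = .arr (b.reverse ++ c) τs ∧ ω = .arr (a ++ c) τs) ∨
    (∃ υs σs τs, b = υs ++ σs ∧ τ = .arr σs.reverse τs ∧ ω = .arr a (υs ++ τs)) := by
  cases h with
  | left ρs σs υs τs => exact Or.inl ⟨υs.reverse, τs, rfl, rfl⟩
  | right ρs σs υs τs => exact Or.inr ⟨υs, σs, τs, rfl, rfl, rfl⟩

/-- General composition: if `Γ ⊢ M : σ` and `Γ ⊢ N : τ` and the type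
composition `σ.τ` is defined, then `Γ ⊢ M;N : σ.τ`. -/
theorem seq_composition (Γ : List STy) (M N : STm) (σ τ ω : STy)
    (hM : Typing Γ M σ) (hN : Typing Γ N τ) (hc : TyComp σ τ ω) :
    Typing Γ (M.comp N) ω := by
  induction hM generalizing N τ ω with
  | star Γ τs =>
      rcases hc.inv with ⟨c, τs', hτ, hω⟩ | ⟨υs', σs', τs', hb, hτ, hω⟩
      · subst hτ; subst hω
        simpa [STm.comp] using hN
      · rw [STm.comp, hω, hb, List.reverse_append]
        exact hN.thin _ _ υs' hτ
  | var Γ n M ρs σs τs υs hget hMty ih =>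
      rcases hc.inv with ⟨c, τs', hτ, hω⟩ | ⟨υs', σs', τs', hb, hτ, hω⟩
      · subst hτ; subst hω
        have hc' : TyComp (.arr (σs.reverse ++ τs.reverse) υs)
            (.arr (υs.reverse ++ c) τs')
            (.arr ((σs.reverse ++ τs.reverse) ++ c) τs') := TyComp.left' _ _ _ _
        have hM' := ih _ _ _ hN hc'
        rw [STm.comp, List.append_assoc]
        rw [List.append_assoc] at hM'
        exact Typing.var' hget hM'
      · subst hb; subst hτ; subst hω
        have hc' : TyComp (.arr (σs.reverse ++ τs.reverse) (υs' ++ σs'))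
            (.arr σs'.reverse τs')
            (.arr (σs.reverse ++ τs.reverse) (υs' ++ τs')) := TyComp.right' _ _ _ _
        have hM' := ih _ _ _ hN hc'
        rw [STm.comp]
        exact Typing.var' hget hM'
  | abs Γ M ρ σs τs hMty ih =>
      have hN' := hN.weaken ρ
      rcases hc.inv with ⟨c, τs', hτ, hω⟩ | ⟨υs', σs', τs', hb, hτ, hω⟩
      · subst hτ; subst hω
        have hc' : TyComp (.arr σs.reverse τs) (.arr (τs.reverse ++ c) τs')
            (.arr (σs.reverse ++ c) τs') := TyComp.left' _ _ _ _
        have hM' := ih _ _ _ hN' hc'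
        rw [STm.comp, List.cons_append]
        exact Typing.abs' hM'
      · subst hb; subst hτ; subst hω
        have hc' : TyComp (.arr σs.reverse (υs' ++ σs')) (.arr σs'.reverse τs')
            (.arr σs.reverse (υs' ++ τs')) := TyComp.right' _ _ _ _
        have hM' := ih _ _ _ hN' hc'
        rw [STm.comp]
        exact Typing.abs' hM'
  | app Γ N' M ρ σs τs hN'ty hMty ihN ihM =>
      rcases hc.inv with ⟨c, τs', hτ, hω⟩ | ⟨υs', σs', τs', hb, hτ, hω⟩
      · subst hτ; subst hω
        have hc' : TyComp (.arr (ρ :: σs.reverse) τs) (.arr (τs.reverse ++ c) τs')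
            (.arr ((ρ :: σs.reverse) ++ c) τs') := TyComp.left' _ _ _ _
        have hM' := ihM _ _ _ hN hc'
        rw [List.cons_append] at hM'
        rw [STm.comp]
        exact Typing.app' hN'ty hM'
      · subst hb; subst hτ; subst hω
        have hc' : TyComp (.arr (ρ :: σs.reverse) (υs' ++ σs')) (.arr σs'.reverse τs')
            (.arr (ρ :: σs.reverse) (υs' ++ τs')) := TyComp.right' _ _ _ _
        have hM' := ihM _ _ _ hN hc'
        rw [STm.comp]
        exact Typing.app' hN'ty hM'
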